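/- Let γ be an invertible linear endomorphism of a finite-dimensional real inner product space E that is proximal, with attracting line E^s and repelling hyperplane E^u orthogonal to each other, and top eigenvalue λ. Consider the chart π_u : P(E) ∖ P(E^u) → E^u sending a line spanned by x = x_u + x_s (with x_u ∈ E^u, x_s ∈ E^s ≅ ℝ, x_s ≠ 0) to x_u/x_s. Then the map induced by γ in this chart is the linear map (1/λ)·(γ|_{E^u}), whose Lipschitz constant equals s̃(γ) := ‖γ|_{E^u}‖/|λ|. -/

import Mathlib

open Filter Topology

/-- Let `γ` be proximal with attracting line `ℝ·e` (top eigenvalue `λ`) orthogonal to the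
invariant repelling hyperplane `E^u`.  In the affine chart `π_u` sending the line through
`x_u + x_s·e` to `x_u / x_s`, the induced map is the linear map `(1/λ)·(γ|_{E^u})`, and its
Lipschitz constant equals `s̃(γ) = ‖γ|_{E^u}‖ / |λ|`. -/
theorem proximal_chart_contraction
    {E : Type*} [NormedAddCommGroup E] [InnerProductSpace ℝ E] [FiniteDimensional ℝ E]
    (γ : E ≃ₗ[ℝ] E) (e : E) (he : ‖e‖ = 1)
    (lam : ℝ) (hlam : lam ≠ 0) (heig : γ e = lam • e)
    (Eu : Submodule ℝ E) (hEuinv : ∀ x ∈ Eu, γ x ∈ Eu)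
    (hcompl : IsCompl (Submodule.span ℝ {e}) Eu)
    (horth : ∀ x ∈ Eu, (inner ℝ e x : ℝ) = 0)
    (hspec : ∀ x ∈ Eu,
      Tendsto (fun n : ℕ => (lam ^ n)⁻¹ • ((γ : E →ₗ[ℝ] E) ^ n) x) atTop (𝓝 0))
    (s : ℝ) (hs : IsLeast {K : ℝ | 0 ≤ K ∧ ∀ x ∈ Eu, ‖γ x‖ ≤ K * ‖x‖} s) :
    (∀ x ∈ Eu, γ (x + e) = lam • (lam⁻¹ • γ x + e)) ∧
    IsLeast {K : ℝ | 0 ≤ K ∧ ∀ x ∈ Eu, ∀ y ∈ Eu,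
      ‖lam⁻¹ • γ x - lam⁻¹ • γ y‖ ≤ K * ‖x - y‖} (s / |lam|) := by
  have hlamabs : (0:ℝ) < |lam| := abs_pos.mpr hlam
  constructor
  · intro x hx
    rw [smul_add, smul_smul, mul_inv_cancel₀ hlam, one_smul, map_add, heig]
  constructor
  · refine ⟨div_nonneg hs.1.1 hlamabs.le, fun x hx y hy => ?_⟩
    have : lam⁻¹ • γ x - lam⁻¹ • γ y = lam⁻¹ • γ (x - y) := by
      rw [map_sub, smul_sub]
    rw [this, norm_smul, norm_inv, Real.norm_eq_abs]
    have h := hs.1.2 (x - y) (Submodule.sub_mem _ hx hy)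
    calc |lam|⁻¹ * ‖γ (x - y)‖ ≤ |lam|⁻¹ * (s * ‖x - y‖) := by
          exact mul_le_mul_of_nonneg_left h (inv_nonneg.mpr hlamabs.le)
      _ = s / |lam| * ‖x - y‖ := by field_simp
  · intro K hK
    rw [div_le_iff₀ hlamabs]
    refine hs.2 ⟨mul_nonneg hK.1 hlamabs.le, fun x hx => ?_⟩
    have := hK.2 x hx 0 (Submodule.zero_mem _)
    rw [map_zero, smul_zero, sub_zero, sub_zero, norm_smul, norm_inv,
      Real.norm_eq_abs] at this
    calc ‖γ x‖ = |lam| * (|lam|⁻¹ * ‖γ x‖) := by field_simp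
    _ ≤ |lam| * (K * ‖x‖) := by nlinarith
    _ = K * |lam| * ‖x‖ := by ring
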